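/- Let k > 0, let L be a real number with 0 < L ≤ π/(2k), and let y ∈ (0, L). Set α_y = − sin(k y)/sin(k (y − L)) and define ψ_y : [0, L] → ℝ by ψ_y(t) = cos(k t) + α_y·cos(k (t − L)). Then ψ_y(t) > 0 for every t ∈ (0, L); consequently ψ_y''(t) = −k²·ψ_y(t) < 0 for every t ∈ (0, L), i.e. ψ_y is strictly concave on (0, L). -/

import Mathlib

open Real

/-- with `α_y = - sin (k y) / sin (k (y - L))` and
`ψ_y(t) = cos (k t) + α_y cos (k (t - L))`, one has `ψ_y > 0` on `(0, L)`; consequently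
`ψ_y'' = -k² ψ_y < 0` on `(0, L)`, i.e. `ψ_y` is strictly concave on `(0, L)`. -/
theorem stmt2 (k L y : ℝ) (hk : 0 < k) (hL : 0 < L) (hLk : L ≤ π / (2 * k))
    (hy : y ∈ Set.Ioo 0 L) (αy : ℝ) (ψ : ℝ → ℝ)
    (hα : αy = - Real.sin (k * y) / Real.sin (k * (y - L)))
    (hψ : ∀ t : ℝ, ψ t = Real.cos (k * t) + αy * Real.cos (k * (t - L))) :
    (∀ t ∈ Set.Ioo 0 L,
      0 < ψ t ∧ deriv (deriv ψ) t = -(k ^ 2) * ψ t ∧ deriv (deriv ψ) t < 0) ∧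
    StrictConcaveOn ℝ (Set.Ioo 0 L) ψ := by
  obtain ⟨hy0, hyL⟩ := hy
  have hψfun : ψ = fun t => Real.cos (k * t) + αy * Real.cos (k * (t - L)) := funext hψ
  have hkL : k * L ≤ π / 2 := by
    rw [le_div_iff₀ (by positivity)] at hLk
    linarith
  -- α_y > 0
  have hs1 : 0 < Real.sin (k * y) := by
    apply Real.sin_pos_of_pos_of_lt_pi (by positivity)
    have : k * y < k * L := by nlinarith
    nlinarith [Real.pi_pos]
  have hs2 : Real.sin (k * (y - L)) < 0 := by
    have : Real.sin (k * (y - L)) = - Real.sin (k * (L - y)) := by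
      rw [← Real.sin_neg]; ring_nf
    rw [this, neg_neg_iff_pos]
    apply Real.sin_pos_of_pos_of_lt_pi (by nlinarith)
    nlinarith [Real.pi_pos]
  have hαpos : 0 < αy := by
    rw [hα, neg_div]
    exact neg_pos.mpr (div_neg_of_pos_of_neg hs1 hs2)
  -- positivity of ψ on (0, L)
  have hpos : ∀ t ∈ Set.Ioo 0 L, 0 < ψ t := by
    intro t ⟨ht0, htL⟩
    have hc1 : 0 < Real.cos (k * t) := by
      apply Real.cos_pos_of_mem_Ioo
      constructor
      · nlinarith [Real.pi_pos]
      · nlinarith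
    have hc2 : 0 < Real.cos (k * (t - L)) := by
      apply Real.cos_pos_of_mem_Ioo
      constructor
      · nlinarith
      · nlinarith [Real.pi_pos]
    rw [hψ t]
    exact add_pos hc1 (mul_pos hαpos hc2)
  -- first derivative
  have hd1 : ∀ t : ℝ, HasDerivAt ψ
      (-(k * Real.sin (k * t)) - αy * (k * Real.sin (k * (t - L)))) t := by
    intro t
    rw [hψfun]
    have hi1 : HasDerivAt (fun t : ℝ => k * t) k t := by
      simpa using (hasDerivAt_id t).const_mul k
    have hi2 : HasDerivAt (fun t : ℝ => k * (t - L)) k t := by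
      simpa using ((hasDerivAt_id t).sub_const L).const_mul k
    have h1 : HasDerivAt (fun t : ℝ => Real.cos (k * t))
        (-Real.sin (k * t) * k) t := (Real.hasDerivAt_cos (k * t)).comp t hi1
    have h2 : HasDerivAt (fun t : ℝ => Real.cos (k * (t - L)))
        (-Real.sin (k * (t - L)) * k) t := by
        have := (Real.hasDerivAt_cos (k * (t - L))).comp t hi2; exact this
    have : HasDerivAt (fun t => Real.cos (k * t) + αy * Real.cos (k * (t - L)))
        (-Real.sin (k * t) * k + αy * (-Real.sin (k * (t - L)) * k)) t :=
      h1.add (h2.const_mul αy)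
    convert this using 1
    ring
  have hderivψ : deriv ψ = fun t =>
      -(k * Real.sin (k * t)) - αy * (k * Real.sin (k * (t - L))) :=
    funext fun t => (hd1 t).deriv
  -- second derivative
  have hd2 : ∀ t : ℝ, deriv (deriv ψ) t = -(k ^ 2) * ψ t := by
    intro t
    rw [hderivψ]
    have hi1 : HasDerivAt (fun t : ℝ => k * t) k t := by
      simpa using (hasDerivAt_id t).const_mul k
    have hi2 : HasDerivAt (fun t : ℝ => k * (t - L)) k t := by
      simpa using ((hasDerivAt_id t).sub_const L).const_mul k
    have h1 : HasDerivAt (fun t : ℝ => Real.sin (k * t))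
        (Real.cos (k * t) * k) t := (Real.hasDerivAt_sin (k * t)).comp t hi1
    have h2 : HasDerivAt (fun t : ℝ => Real.sin (k * (t - L)))
        (Real.cos (k * (t - L)) * k) t := by
        have := (Real.hasDerivAt_sin (k * (t - L))).comp t hi2; exact this
    have hD : HasDerivAt (fun t =>
        -(k * Real.sin (k * t)) - αy * (k * Real.sin (k * (t - L))))
        (-(k ^ 2) * ψ t) t := by
      have : HasDerivAt (fun t => -(k * Real.sin (k * t)) - αy * (k * Real.sin (k * (t - L))))
          (-(k * (Real.cos (k * t) * k)) - αy * (k * (Real.cos (k * (t - L)) * k))) t :=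
        ((h1.const_mul k).neg).sub ((h2.const_mul k).const_mul αy)
      convert this using 1
      rw [hψ t]; ring
    exact hD.deriv
  refine ⟨fun t ht => ⟨hpos t ht, hd2 t, ?_⟩, ?_⟩
  · rw [hd2 t]
    nlinarith [mul_pos (pow_pos hk 2) (hpos t ht)]
  · apply strictConcaveOn_of_deriv2_neg (convex_Ioo 0 L)
    · rw [hψfun]; fun_prop
    · intro x hx
      rw [interior_Ioo] at hx
      have h2 : deriv^[2] ψ x = deriv (deriv ψ) x := by
        simp [Function.iterate_succ, Function.iterate_one]
      rw [h2, hd2 x]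
      nlinarith [mul_pos (pow_pos hk 2) (hpos x hx)]
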